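/- Let V be a ℚ-vector space with an SL₂(ℤ)-action with (u-1)³ = 0, w² acting as 1, and x = log u. Setting y = -wxw and h = [x,y] = xy - yx, one has h = x²w - wx² and [h,x] = 2x and [h,y] = -2y in End(V), i.e., (x, h, y) is an sl₂-triple. -/

import Mathlib

open Matrix

def u : Matrix.SpecialLinearGroup (Fin 2) ℤ :=
  ⟨!![1, 1; 0, 1], by simp [Matrix.det_fin_two_of]⟩

def w : Matrix.SpecialLinearGroup (Fin 2) ℤ :=
  ⟨!![0, 1; -1, 0], by simp [Matrix.det_fin_two_of]⟩

private lemma sl2_rel₁ : u * w * u = w * u⁻¹ * w := by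
  apply Subtype.ext
  simp only [Matrix.SpecialLinearGroup.coe_mul, Matrix.SpecialLinearGroup.coe_inv, Matrix.SpecialLinearGroup.coe_pow, Matrix.adjugate_fin_two]
  simp [u, w, Matrix.SpecialLinearGroup.coe_mul, SpecialLinearGroup.SL2_inv_expl]

private lemma sl2_rel₂ : u⁻¹ * w * u⁻¹ = w * u * w * w ^ 2 := by
  apply Subtype.ext
  simp only [Matrix.SpecialLinearGroup.coe_mul, Matrix.SpecialLinearGroup.coe_inv, Matrix.SpecialLinearGroup.coe_pow, Matrix.adjugate_fin_two]
  simp [u, w, pow_two, Matrix.SpecialLinearGroup.coe_mul, SpecialLinearGroup.SL2_inv_expl]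

private lemma ofNat_eq_smul_one {V : Type*} [AddCommGroup V] [Module ℚ V] (n : ℕ) [n.AtLeastTwo] :
    (no_index (OfNat.ofNat n) : Module.End ℚ V) = (OfNat.ofNat n : ℕ) • (1 : Module.End ℚ V) := by
  simp [nsmul_eq_mul]

private lemma aux_smul_cancel {V : Type*} [AddCommGroup V] [Module ℚ V]
    {z : Module.End ℚ V} {c : ℚ} (hc : c ≠ 0) (h : c • z = 0) : z = 0 := by
  have h2 := congrArg (fun t => c⁻¹ • t) h
  simpa [smul_smul, inv_mul_cancel₀ hc] using h2

private lemma aux_cancel {V : Type*} [AddCommGroup V] [Module ℚ V]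
    (n : ℕ) [n.AtLeastTwo] (hn : (OfNat.ofNat n : ℚ) ≠ 0)
    {z : Module.End ℚ V} (h : (OfNat.ofNat n : Module.End ℚ V) * z = 0) : z = 0 := by
  rw [show (OfNat.ofNat n : Module.End ℚ V) * z = (OfNat.ofNat n : ℚ) • z by
    rw [Algebra.smul_def, map_ofNat]] at h
  exact aux_smul_cancel hn h

set_option maxHeartbeats 4000000 in
/-- In a cubic module with `w²` acting trivially, with `x = log u`, `y = -wxw`,
`h = [x,y]`, one has `h = x²w - wx²`, `[h,x] = 2x` and `[h,y] = -2y`: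
`(x, h, y)` is an `sl₂`-triple. -/
theorem cubic_plus_sl2_triple
    (V : Type*) [AddCommGroup V] [Module ℚ V]
    (ρ : Representation ℚ (Matrix.SpecialLinearGroup (Fin 2) ℤ) V)
    (hcub : (ρ u - 1) ^ 3 = 0)
    (hi : ρ (w ^ 2) = 1)
    (x y h : Module.End ℚ V)
    (hx : x = (ρ u - 1) - (2⁻¹ : ℚ) • (ρ u - 1) ^ 2)
    (hy : y = -(ρ w * x * ρ w))
    (hh : h = x * y - y * x) :
    h = x ^ 2 * ρ w - ρ w * x ^ 2 ∧
      h * x - x * h = 2 • x ∧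
      h * y - y * h = -(2 • y) := by
  have hWW : ρ w * ρ w = 1 := by rw [← _root_.map_mul, ← pow_two]; exact hi
  have hn3 : (ρ u - 1) * (ρ u - 1) * (ρ u - 1) = 0 := by
    simpa [pow_succ, pow_two] using hcub
  have h2x : x + x = (ρ u - 1) + (ρ u - 1) - (ρ u - 1) ^ 2 := by
    rw [hx]; module
  have hx3 : x * x * x = 0 := by
    have c : (8 : Module.End ℚ V) * (x * x * x) = (x + x) * (x + x) * (x + x) := by
      noncomm_ring [ofNat_eq_smul_one]
    rw [h2x] at c
    have c2 : ((ρ u - 1) + (ρ u - 1) - (ρ u - 1) ^ 2) * ((ρ u - 1) + (ρ u - 1) - (ρ u - 1) ^ 2) *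
        ((ρ u - 1) + (ρ u - 1) - (ρ u - 1) ^ 2) =
        8 * ((ρ u - 1) * (ρ u - 1) * (ρ u - 1)) -
          12 * ((ρ u - 1) * (ρ u - 1) * (ρ u - 1) * (ρ u - 1)) +
          6 * ((ρ u - 1) * (ρ u - 1) * (ρ u - 1) * ((ρ u - 1) * (ρ u - 1))) -
          (ρ u - 1) * (ρ u - 1) * (ρ u - 1) * ((ρ u - 1) * (ρ u - 1) * (ρ u - 1)) := by
      noncomm_ring [ofNat_eq_smul_one]
    rw [c2, hn3] at c
    simp only [mul_zero, zero_mul, sub_zero, add_zero, zero_add, zero_sub, neg_zero] at c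
    exact aux_cancel 8 (by norm_num) c
  have hP8 : 8 + 8 * x + 4 * (x * x) = 8 * ρ u := by
    have e : (8 : Module.End ℚ V) + 8 * x + 4 * (x * x) = 8 + 4 * (x + x) + (x + x) * (x + x) := by
      noncomm_ring [ofNat_eq_smul_one]
    rw [e, h2x]
    have c : (8 : Module.End ℚ V) + 4 * ((ρ u - 1) + (ρ u - 1) - (ρ u - 1) ^ 2) +
        ((ρ u - 1) + (ρ u - 1) - (ρ u - 1) ^ 2) * ((ρ u - 1) + (ρ u - 1) - (ρ u - 1) ^ 2) =
        8 * ρ u - 4 * ((ρ u - 1) * (ρ u - 1) * (ρ u - 1)) +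
          (ρ u - 1) * (ρ u - 1) * (ρ u - 1) * (ρ u - 1) := by
      noncomm_ring [ofNat_eq_smul_one]
    rw [c, hn3]
    simp only [mul_zero, zero_mul, sub_zero, add_zero]
  have hQmul : ρ u * (8 - 8 * x + 4 * (x * x)) = 8 := by
    have c : (8 : Module.End ℚ V) * (ρ u * (8 - 8 * x + 4 * (x * x))) =
        (8 + 8 * x + 4 * (x * x)) * (8 - 8 * x + 4 * (x * x)) := by
      rw [hP8]; noncomm_ring [ofNat_eq_smul_one]
    have c2 : ((8 : Module.End ℚ V) + 8 * x + 4 * (x * x)) * (8 - 8 * x + 4 * (x * x)) =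
        64 + 16 * (x * x * x * x) := by noncomm_ring [ofNat_eq_smul_one]
    rw [c2, hx3] at c
    simp only [zero_mul, mul_zero, add_zero] at c
    have c3 : (8 : Module.End ℚ V) * (ρ u * (8 - 8 * x + 4 * (x * x)) - 8) = 0 := by
      rw [mul_sub, c]; norm_num
    exact sub_eq_zero.mp (aux_cancel 8 (by norm_num) c3)
  have hUV : ρ u⁻¹ * ρ u = 1 := by rw [← _root_.map_mul, inv_mul_cancel, _root_.map_one]
  have hV8 : 8 * ρ u⁻¹ = 8 - 8 * x + 4 * (x * x) := by
    calc 8 * ρ u⁻¹ = ρ u⁻¹ * 8 := by noncomm_ring [ofNat_eq_smul_one]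
    _ = ρ u⁻¹ * (ρ u * (8 - 8 * x + 4 * (x * x))) := by rw [hQmul]
    _ = (ρ u⁻¹ * ρ u) * (8 - 8 * x + 4 * (x * x)) := by rw [mul_assoc]
    _ = 8 - 8 * x + 4 * (x * x) := by rw [hUV, one_mul]
  have hK7 : ρ u * ρ w * ρ u = ρ w * ρ u⁻¹ * ρ w := by
    have h7 := congrArg ρ sl2_rel₁
    simpa [_root_.map_mul] using h7
  have hK8 : ρ u⁻¹ * ρ w * ρ u⁻¹ = ρ w * ρ u * ρ w := by
    have h8 := congrArg ρ sl2_rel₂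
    simpa [_root_.map_mul, hi] using h8
  have hK7x : (2+2*x+x*x)*ρ w*(2+2*x+x*x) = 2*(ρ w*(2-2*x+x*x)*ρ w) := by
    have c : (16 : Module.End ℚ V) *
        ((2+2*x+x*x)*ρ w*(2+2*x+x*x) - 2*(ρ w*(2-2*x+x*x)*ρ w)) =
        (8 + 8*x + 4*(x*x))*ρ w*(8 + 8*x + 4*(x*x)) - 8*(ρ w*(8 - 8*x + 4*(x*x))*ρ w) := by
      noncomm_ring [ofNat_eq_smul_one]
    rw [hP8, ← hV8] at c
    have c2 : (8*ρ u)*ρ w*(8*ρ u) - 8*(ρ w*(8*ρ u⁻¹)*ρ w) =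
        64*(ρ u*ρ w*ρ u) - 64*(ρ w*ρ u⁻¹*ρ w) := by noncomm_ring [ofNat_eq_smul_one]
    rw [c2, hK7, sub_self] at c
    exact sub_eq_zero.mp (aux_cancel 16 (by norm_num) c)
  have hK8x : (2-2*x+x*x)*ρ w*(2-2*x+x*x) = 2*(ρ w*(2+2*x+x*x)*ρ w) := by
    have c : (16 : Module.End ℚ V) *
        ((2-2*x+x*x)*ρ w*(2-2*x+x*x) - 2*(ρ w*(2+2*x+x*x)*ρ w)) =
        (8 - 8*x + 4*(x*x))*ρ w*(8 - 8*x + 4*(x*x)) - 8*(ρ w*(8 + 8*x + 4*(x*x))*ρ w) := by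
      noncomm_ring [ofNat_eq_smul_one]
    rw [hP8, ← hV8] at c
    have c2 : (8*ρ u⁻¹)*ρ w*(8*ρ u⁻¹) - 8*(ρ w*(8*ρ u)*ρ w) =
        64*(ρ u⁻¹*ρ w*ρ u⁻¹) - 64*(ρ w*ρ u*ρ w) := by noncomm_ring [ofNat_eq_smul_one]
    rw [c2, hK8, sub_self] at c
    exact sub_eq_zero.mp (aux_cancel 16 (by norm_num) c)
  have hRA : ρ w*x*ρ w + x + x*ρ w + ρ w*x = 0 := by
    have c : (24 : Module.End ℚ V) * (ρ w*x*ρ w + x + x*ρ w + ρ w*x) =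
      -((-4)*((x*x*x)*(ρ w)) +
      (-2)*((x*x*x)*(ρ w*x*x)) +
      (16)*((ρ w*ρ w - 1)*(x)) +
      (8)*((ρ w*ρ w - 1)*(x*ρ w)) +
      (-8)*((ρ w*ρ w - 1)*(x*ρ w*ρ w)) +
      (-3)*(((2+2*x+x*x)*ρ w*(2+2*x+x*x) - 2*(ρ w*(2-2*x+x*x)*ρ w))) +
      (-1)*(((2+2*x+x*x)*ρ w*(2+2*x+x*x) - 2*(ρ w*(2-2*x+x*x)*ρ w))*(ρ w)) +
      (((2+2*x+x*x)*ρ w*(2+2*x+x*x) - 2*(ρ w*(2-2*x+x*x)*ρ w))*(x)) +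
      (((2+2*x+x*x)*ρ w*(2+2*x+x*x) - 2*(ρ w*(2-2*x+x*x)*ρ w))*(x*ρ w)) +
      (3)*(((2-2*x+x*x)*ρ w*(2-2*x+x*x) - 2*(ρ w*(2+2*x+x*x)*ρ w))) +
      (((2-2*x+x*x)*ρ w*(2-2*x+x*x) - 2*(ρ w*(2+2*x+x*x)*ρ w))*(ρ w)) +
      (((2-2*x+x*x)*ρ w*(2-2*x+x*x) - 2*(ρ w*(2+2*x+x*x)*ρ w))*(x)) +
      (((2-2*x+x*x)*ρ w*(2-2*x+x*x) - 2*(ρ w*(2+2*x+x*x)*ρ w))*(x*ρ w)) +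
      (-4)*((ρ w)*(x*x*x)) +
      (-8)*((ρ w)*(x*x*x)*(ρ w)) +
      (-2)*((ρ w)*(x*x*x)*(ρ w*x*x)) +
      (-1)*((ρ w)*((2+2*x+x*x)*ρ w*(2+2*x+x*x) - 2*(ρ w*(2-2*x+x*x)*ρ w))) +
      ((ρ w)*((2+2*x+x*x)*ρ w*(2+2*x+x*x) - 2*(ρ w*(2-2*x+x*x)*ρ w))*(ρ w)) +
      ((ρ w)*((2-2*x+x*x)*ρ w*(2-2*x+x*x) - 2*(ρ w*(2+2*x+x*x)*ρ w))) +
      (-1)*((ρ w)*((2-2*x+x*x)*ρ w*(2-2*x+x*x) - 2*(ρ w*(2+2*x+x*x)*ρ w))*(ρ w)) +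
      (8)*((ρ w*x)*(ρ w*ρ w - 1)) +
      ((ρ w*x)*((2+2*x+x*x)*ρ w*(2+2*x+x*x) - 2*(ρ w*(2-2*x+x*x)*ρ w))) +
      ((ρ w*x)*((2-2*x+x*x)*ρ w*(2-2*x+x*x) - 2*(ρ w*(2+2*x+x*x)*ρ w))) +
      (8)*((x)*(ρ w*ρ w - 1)) +
      ((x)*((2+2*x+x*x)*ρ w*(2+2*x+x*x) - 2*(ρ w*(2-2*x+x*x)*ρ w))) +
      ((x)*((2-2*x+x*x)*ρ w*(2-2*x+x*x) - 2*(ρ w*(2+2*x+x*x)*ρ w))) +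
      (-2)*((x*x*ρ w)*(x*x*x)) +
      (-2)*((x*x*ρ w)*(x*x*x)*(ρ w))) := by
      noncomm_ring [ofNat_eq_smul_one]
    rw [hx3, hWW, hK7x, hK8x] at c
    simp only [sub_self, mul_zero, zero_mul, mul_one, one_mul, add_zero, zero_add,
      neg_zero, sub_zero] at c
    exact aux_cancel 24 (by norm_num) c
  have hRQ : x*x*ρ w*x + x*ρ w*(x*x) - (x + x) = 0 := by
    have c : (4 : Module.End ℚ V) * (x*x*ρ w*x + x*ρ w*(x*x) - (x + x)) =
        ((2+2*x+x*x)*ρ w*(2+2*x+x*x) - 2*(ρ w*(2-2*x+x*x)*ρ w)) -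
        ((2-2*x+x*x)*ρ w*(2-2*x+x*x) - 2*(ρ w*(2+2*x+x*x)*ρ w)) -
        8*(ρ w*x*ρ w + x + x*ρ w + ρ w*x) := by noncomm_ring [ofNat_eq_smul_one]
    rw [hK7x, hK8x, hRA] at c
    simp only [sub_self, mul_zero, zero_mul, sub_zero, zero_sub, neg_zero, add_zero] at c
    exact aux_cancel 4 (by norm_num) c
  have hg1 : h = x ^ 2 * ρ w - ρ w * x ^ 2 := by
    rw [hh, hy, ← sub_eq_zero]
    refine aux_cancel 8 (by norm_num) ?_
    have c : (8 : Module.End ℚ V) *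
        (x * -(ρ w * x * ρ w) - -(ρ w * x * ρ w) * x - (x ^ 2 * ρ w - ρ w * x ^ 2)) =
      -((-4)*((x*x*x)*(ρ w*x)) +
      (-1)*(((2+2*x+x*x)*ρ w*(2+2*x+x*x) - 2*(ρ w*(2-2*x+x*x)*ρ w))*(x)) +
      (((2-2*x+x*x)*ρ w*(2-2*x+x*x) - 2*(ρ w*(2+2*x+x*x)*ρ w))*(x)) +
      ((x)*((2+2*x+x*x)*ρ w*(2+2*x+x*x) - 2*(ρ w*(2-2*x+x*x)*ρ w))) +
      (-1)*((x)*((2-2*x+x*x)*ρ w*(2-2*x+x*x) - 2*(ρ w*(2+2*x+x*x)*ρ w))) +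
      (4)*((x*ρ w)*(x*x*x))) := by
      noncomm_ring [ofNat_eq_smul_one]
    rw [hx3, hK7x, hK8x] at c
    simp only [sub_self, mul_zero, zero_mul, mul_one, one_mul, add_zero, zero_add,
      neg_zero, sub_zero] at c
    exact c
  refine ⟨hg1, ?_, ?_⟩
  · rw [hg1, two_smul]
    have c : (x ^ 2 * ρ w - ρ w * x ^ 2) * x - x * (x ^ 2 * ρ w - ρ w * x ^ 2) =
        (x + x) + (x*x*ρ w*x + x*ρ w*(x*x) - (x + x)) - ρ w*(x*x*x) - (x*x*x)*ρ w := by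
      noncomm_ring [ofNat_eq_smul_one]
    rw [hRQ, hx3] at c
    simp only [add_zero, sub_zero, mul_zero, zero_mul] at c
    exact c
  · rw [hg1, hy, two_smul]
    have c : (x ^ 2 * ρ w - ρ w * x ^ 2) * -(ρ w * x * ρ w) -
        -(ρ w * x * ρ w) * (x ^ 2 * ρ w - ρ w * x ^ 2) =
        -(-(ρ w * x * ρ w) + -(ρ w * x * ρ w)) + ρ w*(x*x*ρ w*x + x*ρ w*(x*x) - (x + x))*ρ w -
          (x*x)*(ρ w*ρ w - 1)*(x*ρ w) - (ρ w*x)*(ρ w*ρ w - 1)*(x*x) -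
          (x*x*x)*ρ w - ρ w*(x*x*x) := by
      noncomm_ring [ofNat_eq_smul_one]
    rw [hRQ, hWW, hx3] at c
    simp only [sub_self, mul_zero, zero_mul, mul_one, one_mul, add_zero, zero_add, sub_zero] at c
    exact c
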